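/- Let N ≥ 4 and m ∈ ℕ. On (0,1) define α(x) = x/(1-x), β(x) = -(1/(1-x))·( (x/(1-x))·(N/2) + 5/2 ), the first-order operator (Ď y)(x) = -(1-x) y'(x), and the second-order operator (Δ y)(x) = (1-x) y''(x) - (N/2) y'(x). Then there exist functions γ_{0k}, γ_{1k} ∈ C^∞((0,1)) for k = 0, …, m, with γ_{1m} ≡ 0, such that for every y ∈ C^∞((0,1)) and every x ∈ (0,1): ((αΔ + βĎ)^m y)(x) = Σ_{k=0}^{m} ( γ_{1k}(x)·(Ď Δ^k y)(x) + γ_{0k}(x)·(Δ^k y)(x) ). -/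

import Mathlib

open Real Set Filter Topology

/-- `Ď y = -(1-x) y'` (that is, `z dy/dz` in the variable `z = 1-x`). -/
noncomputable def Dcheck1 (y : ℝ → ℝ) : ℝ → ℝ := fun x => -(1-x) * deriv y x

/-- `Δ y = (1-x) y'' - (N/2) y'` (that is, `z d²y/dz² + (N/2) dy/dz` with `z = 1-x`). -/
noncomputable def Delta1 (N : ℝ) (y : ℝ → ℝ) : ℝ → ℝ := fun x =>
  (1-x) * deriv (deriv y) x - (N/2) * deriv y x

/-- `α(x) = x/(1-x)`. -/
noncomputable def alphaCoef : ℝ → ℝ := fun x => x / (1-x)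

/-- `β(x) = -(1/(1-x))·((x/(1-x))·(N/2) + 5/2)`. -/
noncomputable def betaCoef (N : ℝ) : ℝ → ℝ := fun x =>
  -(1/(1-x)) * ((x/(1-x)) * (N/2) + 5/2)

/-- The operator `αΔ + βĎ`. -/
noncomputable def Tober (N : ℝ) (y : ℝ → ℝ) : ℝ → ℝ := fun x =>
  alphaCoef x * Delta1 N y x + betaCoef N x * Dcheck1 y x

noncomputable section
namespace NF

/-- smooth on (0,1) -/
def Sm (f : ℝ → ℝ) : Prop := ContDiffOn ℝ (⊤:ℕ∞) f (Ioo 0 1)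

lemma Sm.deriv' {f : ℝ → ℝ} (hf : Sm f) : Sm (deriv f) :=
  hf.deriv_of_isOpen isOpen_Ioo (by exact_mod_cast le_top)

lemma Sm.diffAt {f : ℝ → ℝ} (hf : Sm f) {x : ℝ} (hx : x ∈ Ioo (0:ℝ) 1) :
    DifferentiableAt ℝ f x :=
  (hf.contDiffAt (isOpen_Ioo.mem_nhds hx)).differentiableAt (by simp)

lemma Sm.iter {y : ℝ → ℝ} (hy : Sm y) : ∀ j, Sm (iteratedDeriv j y) := by
  intro j; induction j with
  | zero => simpa [iteratedDeriv_zero] using hy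
  | succ n ih => rw [iteratedDeriv_succ]; exact ih.deriv'

lemma deriv_congr_Ioo {f g : ℝ → ℝ} (h : ∀ t ∈ Ioo (0:ℝ) 1, f t = g t) {x : ℝ}
    (hx : x ∈ Ioo (0:ℝ) 1) : deriv f x = deriv g x :=
  Filter.EventuallyEq.deriv_eq (eventually_of_mem (isOpen_Ioo.mem_nhds hx) h)

end NF
namespace NF

def LC (c : ℕ → ℝ → ℝ) (n : ℕ) (y : ℝ → ℝ) (x : ℝ) : ℝ :=
  ∑ j ∈ Finset.range n, c j x * iteratedDeriv j y x

def Supp (c : ℕ → ℝ → ℝ) (n : ℕ) : Prop := ∀ j, n ≤ j → ∀ x, c j x = 0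

def shiftD (c : ℕ → ℝ → ℝ) : ℕ → ℝ → ℝ :=
  fun j x => deriv (c j) x + (if j = 0 then 0 else c (j-1) x)

lemma deriv_of_zero {c : ℝ → ℝ} (h : ∀ x, c x = 0) : ∀ x, deriv c x = 0 := by
  have : c = fun _ => (0:ℝ) := funext h
  simp [this]

lemma shiftD_sm {c : ℕ → ℝ → ℝ} (h : ∀ j, Sm (c j)) : ∀ j, Sm (shiftD c j) := by
  intro j
  rcases Nat.eq_zero_or_pos j with h0 | h0
  · subst h0
    have : shiftD c 0 = fun x => deriv (c 0) x + 0 := by funext x; simp [shiftD]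
    rw [this]
    exact ((h 0).deriv').add contDiffOn_const
  · have : shiftD c j = fun x => deriv (c j) x + c (j-1) x := by
      funext x; simp [shiftD, Nat.pos_iff_ne_zero.mp h0]
    rw [this]
    exact ((h j).deriv').add (h (j-1))

lemma shiftD_supp {c : ℕ → ℝ → ℝ} {n : ℕ} (h : Supp c n) : Supp (shiftD c) (n+1) := by
  intro j hj x
  have hj0 : j ≠ 0 := by omega
  simp only [shiftD, hj0, if_false]
  rw [deriv_of_zero (h j (by omega)) x, h (j-1) (by omega) x]
  ring

/-- key derivative computation -/
lemma LC_deriv {c : ℕ → ℝ → ℝ} {n : ℕ} (hc : ∀ j, Sm (c j)) (hs : Supp c n)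
    {y : ℝ → ℝ} (hy : Sm y) {x : ℝ} (hx : x ∈ Ioo (0:ℝ) 1) :
    deriv (LC c n y) x = LC (shiftD c) (n+1) y x := by
  have hD : ∀ j, DifferentiableAt ℝ (iteratedDeriv j y) x := fun j => (hy.iter j).diffAt hx
  have hC : ∀ j, DifferentiableAt ℝ (c j) x := fun j => (hc j).diffAt hx
  have h1 : deriv (LC c n y) x
      = ∑ j ∈ Finset.range n, (deriv (c j) x * iteratedDeriv j y x
          + c j x * iteratedDeriv (j+1) y x) := by
    rw [show LC c n y = fun t => ∑ j ∈ Finset.range n, c j t * iteratedDeriv j y t from rfl,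
      deriv_fun_sum (fun j _ => ((hC j).fun_mul (hD j)))]
    refine Finset.sum_congr rfl fun j _ => ?_
    rw [deriv_fun_mul (hC j) (hD j), iteratedDeriv_succ]
  rw [h1]
  have h2 : LC (shiftD c) (n+1) y x
      = ∑ j ∈ Finset.range (n+1), deriv (c j) x * iteratedDeriv j y x
        + ∑ j ∈ Finset.range (n+1),
            (if j = 0 then 0 else c (j-1) x) * iteratedDeriv j y x := by
    rw [LC, ← Finset.sum_add_distrib]
    refine Finset.sum_congr rfl fun j _ => ?_
    rw [shiftD]; ring
  rw [h2, Finset.sum_range_succ, deriv_of_zero (hs n le_rfl) x, Finset.sum_range_succ']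
  simp only [Nat.add_eq_zero, one_ne_zero, and_false, if_false, Nat.add_sub_cancel,
    if_pos rfl, zero_mul, add_zero, mul_zero]
  rw [Finset.sum_add_distrib]; simp

lemma LC_pad {c : ℕ → ℝ → ℝ} {n m : ℕ} (hs : Supp c n) (hnm : n ≤ m) (y : ℝ → ℝ) (x : ℝ) :
    LC c m y x = LC c n y x := by
  refine (Finset.sum_subset (Finset.range_subset_range.mpr hnm) fun j hj hj' => ?_).symm
  rw [hs j (by simpa using hj') x, zero_mul]

end NF
namespace NF

lemma tober_eq (N : ℝ) (g : ℝ → ℝ) {x : ℝ} (hx : x ∈ Ioo (0:ℝ) 1) :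
    Tober N g x = x * deriv (deriv g) x + 5/2 * deriv g x := by
  have h1 : (1:ℝ) - x ≠ 0 := by have := hx.2; linarith
  simp only [Tober, alphaCoef, betaCoef, Delta1, Dcheck1]
  field_simp
  ring

lemma sm_one_sub : Sm (fun x : ℝ => 1 - x) :=
  (contDiff_const.sub contDiff_id).contDiffOn

lemma delta_pow (N : ℝ) (k : ℕ) :
    ∃ d : ℕ → ℝ → ℝ, (∀ j, Sm (d j)) ∧ Supp d (2*k+1) ∧
      (∀ x, d (2*k) x = (1-x)^k) ∧
      ∀ y, Sm y → ∀ x ∈ Ioo (0:ℝ) 1, (Delta1 N)^[k] y x = LC d (2*k+1) y x := by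
  induction k with
  | zero =>
    refine ⟨fun j x => if j = 0 then 1 else 0, fun j => ?_, fun j hj x => ?_, fun x => ?_, ?_⟩
    · rcases Nat.eq_zero_or_pos j with h | h
      · simp [h]; exact contDiffOn_const
      · simp [Nat.pos_iff_ne_zero.mp h]; exact contDiffOn_const
    · simp [Nat.pos_iff_ne_zero.mp (by omega : 0 < j)]
    · simp
    · intro y hy x hx
      simp [LC]
  | succ k ih =>
    obtain ⟨d, hsm, hsupp, htop, heq⟩ := ih
    set e := shiftD d with he
    set f := shiftD e with hf
    have hesm : ∀ j, Sm (e j) := shiftD_sm hsm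
    have hfsm : ∀ j, Sm (f j) := shiftD_sm hesm
    have hesupp : Supp e (2*k+2) := shiftD_supp hsupp
    have hfsupp : Supp f (2*k+3) := shiftD_supp hesupp
    have hidx : 2*(k+1)+1 = 2*k+3 := by ring
    have hidx2 : 2*(k+1) = 2*k+2 := by ring
    refine ⟨fun j x => (1-x) * f j x - N/2 * e j x, fun j => ?_, fun j hj x => ?_, fun x => ?_, ?_⟩
    · exact (sm_one_sub.mul (hfsm j)).sub (contDiffOn_const.mul (hesm j))
    · show (1-x) * f j x - N/2 * e j x = 0
      rw [hfsupp j (by omega) x, hesupp j (by omega) x]; ring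
    · show (1-x) * f (2*(k+1)) x - N/2 * e (2*(k+1)) x = (1-x)^(k+1)
      rw [hidx2]
      have h1 : e (2*k+2) x = 0 := hesupp _ (by omega) x
      have h2 : f (2*k+2) x = deriv (e (2*k+2)) x + e (2*k+1) x := by
        show deriv (e (2*k+2)) x + (if 2*k+2 = 0 then 0 else e (2*k+2-1) x) = _
        simp only [show 2*k+2 ≠ 0 by omega, if_false]
        norm_num
      have h3 : deriv (e (2*k+2)) x = 0 := deriv_of_zero (fun t => hesupp _ (by omega) t) x
      have h4 : e (2*k+1) x = deriv (d (2*k+1)) x + d (2*k) x := by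
        show deriv (d (2*k+1)) x + (if 2*k+1 = 0 then 0 else d (2*k+1-1) x) = _
        simp only [show 2*k+1 ≠ 0 by omega, if_false]
        norm_num
      have h5 : deriv (d (2*k+1)) x = 0 := deriv_of_zero (fun t => hsupp _ (by omega) t) x
      rw [h1, h2, h3, h4, h5, htop x]
      ring
    · intro y hy x hx
      have hg : ∀ t ∈ Ioo (0:ℝ) 1, (Delta1 N)^[k] y t = LC d (2*k+1) y t := heq y hy
      have hd1 : ∀ t ∈ Ioo (0:ℝ) 1, deriv ((Delta1 N)^[k] y) t = LC e (2*k+2) y t := by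
        intro t ht
        rw [deriv_congr_Ioo hg ht, LC_deriv hsm hsupp hy ht]
      have hd2 : deriv (deriv ((Delta1 N)^[k] y)) x = LC f (2*k+3) y x := by
        rw [deriv_congr_Ioo hd1 hx, LC_deriv hesm hesupp hy hx]
      have key : (Delta1 N)^[k+1] y x
          = (1-x) * LC f (2*k+3) y x - N/2 * LC e (2*k+3) y x := by
        rw [Function.iterate_succ_apply']
        show (1-x) * deriv (deriv ((Delta1 N)^[k] y)) x
            - N/2 * deriv ((Delta1 N)^[k] y) x = _
        have hw : LC e (2*k+3) y x = LC e (2*k+2) y x := LC_pad hesupp (by omega) y x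
        rw [hd2, hd1 x hx, ← hw]
      rw [key, hidx, LC, LC, LC, Finset.mul_sum, Finset.mul_sum, ← Finset.sum_sub_distrib]
      exact (Finset.sum_congr rfl fun j _ => by ring).symm

end NF
namespace NF

lemma tober_pow (N : ℝ) (m : ℕ) :
    ∃ c : ℕ → ℝ → ℝ, (∀ j, Sm (c j)) ∧ Supp c (2*m+1) ∧
      ∀ y, Sm y → ∀ x ∈ Ioo (0:ℝ) 1, (Tober N)^[m] y x = LC c (2*m+1) y x := by
  induction m with
  | zero =>
    refine ⟨fun j x => if j = 0 then 1 else 0, fun j => ?_, fun j hj x => ?_, ?_⟩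
    · rcases Nat.eq_zero_or_pos j with h | h
      · simp [h]; exact contDiffOn_const
      · simp [Nat.pos_iff_ne_zero.mp h]; exact contDiffOn_const
    · simp [Nat.pos_iff_ne_zero.mp (by omega : 0 < j)]
    · intro y hy x hx
      simp [LC]
  | succ m ih =>
    obtain ⟨c, hsm, hsupp, heq⟩ := ih
    set e := shiftD c with he
    set f := shiftD e with hf
    have hesm : ∀ j, Sm (e j) := shiftD_sm hsm
    have hfsm : ∀ j, Sm (f j) := shiftD_sm hesm
    have hesupp : Supp e (2*m+2) := shiftD_supp hsupp
    have hfsupp : Supp f (2*m+3) := shiftD_supp hesupp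
    have hidx : 2*(m+1)+1 = 2*m+3 := by ring
    refine ⟨fun j t => t * f j t + 5/2 * e j t, fun j => ?_, fun j hj x => ?_, ?_⟩
    · exact ((contDiff_id.contDiffOn).mul (hfsm j)).add (contDiffOn_const.mul (hesm j))
    · show x * f j x + 5/2 * e j x = 0
      rw [hfsupp j (by omega) x, hesupp j (by omega) x]; ring
    · intro y hy x hx
      have hg : ∀ t ∈ Ioo (0:ℝ) 1, (Tober N)^[m] y t = LC c (2*m+1) y t := heq y hy
      have hd1 : ∀ t ∈ Ioo (0:ℝ) 1, deriv ((Tober N)^[m] y) t = LC e (2*m+2) y t := by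
        intro t ht
        rw [deriv_congr_Ioo hg ht, LC_deriv hsm hsupp hy ht]
      have hd2 : deriv (deriv ((Tober N)^[m] y)) x = LC f (2*m+3) y x := by
        rw [deriv_congr_Ioo hd1 hx, LC_deriv hesm hesupp hy hx]
      have hw : LC e (2*m+3) y x = LC e (2*m+2) y x := LC_pad hesupp (by omega) y x
      have key : (Tober N)^[m+1] y x
          = x * LC f (2*m+3) y x + 5/2 * LC e (2*m+3) y x := by
        rw [Function.iterate_succ_apply', tober_eq N _ hx, hd2, hd1 x hx, ← hw]
      rw [key, hidx, LC, LC, LC, Finset.mul_sum, Finset.mul_sum, ← Finset.sum_add_distrib]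
      exact (Finset.sum_congr rfl fun j _ => by ring).symm

end NF
namespace NF

lemma sm_pow_inv (k : ℕ) : Sm (fun x : ℝ => ((1-x)^k)⁻¹) := by
  refine ContDiffOn.inv (sm_one_sub.pow k) ?_
  intro x hx
  exact pow_ne_zero _ (by have := hx.2; intro h; simp only [sub_eq_zero] at h; linarith [hx.2])

lemma elim (N : ℝ) : ∀ (n : ℕ) (c : ℕ → ℝ → ℝ), (∀ j, Sm (c j)) → Supp c n →
    ∃ γ0 γ1 : ℕ → ℝ → ℝ,
      (∀ k, Sm (γ0 k) ∧ Sm (γ1 k)) ∧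
      (∀ k, n ≤ 2*k → ∀ x, γ0 k x = 0) ∧
      (∀ k, n ≤ 2*k+1 → ∀ x, γ1 k x = 0) ∧
      ∀ y, Sm y → ∀ x ∈ Ioo (0:ℝ) 1,
        LC c n y x = ∑ k ∈ Finset.range n,
          (γ1 k x * Dcheck1 ((Delta1 N)^[k] y) x + γ0 k x * (Delta1 N)^[k] y x) := by
  intro n
  induction n using Nat.strong_induction_on with
  | _ n IH =>
  rcases n with _ | j
  · intro c hsm hsupp
    exact ⟨0, 0, fun k => ⟨contDiffOn_const, contDiffOn_const⟩, fun k _ x => rfl,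
      fun k _ x => rfl, fun y hy x hx => by simp [LC]⟩
  intro c hsm hsupp
  rcases Nat.even_or_odd j with hpar | hpar
  · -- even top derivative j = 2k : use Δ^k
    obtain ⟨k, hk⟩ := hpar
    have hk2 : j = 2*k := by omega
    subst hk2
    obtain ⟨d, hdsm, hdsupp, hdtop, hdeq⟩ := delta_pow N k
    set μ : ℝ → ℝ := fun x => c (2*k) x * ((1-x)^k)⁻¹ with hμ
    have hμsm : Sm μ := (hsm _).mul (sm_pow_inv k)
    set ct : ℕ → ℝ → ℝ := fun i x => if i < 2*k then c i x - μ x * d i x else 0 with hct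
    have hctsm : ∀ i, Sm (ct i) := by
      intro i
      by_cases h : i < 2*k
      · have : ct i = fun x => c i x - μ x * d i x := by funext x; simp [hct, h]
        rw [this]; exact (hsm i).sub (hμsm.mul (hdsm i))
      · have : ct i = fun _ => 0 := by funext x; simp [hct, h]
        rw [this]; exact contDiffOn_const
    have hctsupp : Supp ct (2*k) := by
      intro i hi x; simp [hct, show ¬ i < 2*k by omega]
    obtain ⟨γ0', γ1', hγsm', h0supp', h1supp', heq'⟩ := IH (2*k) (by omega) ct hctsm hctsupp
    refine ⟨fun i => if i = k then (fun x => γ0' i x + μ x) else γ0' i, γ1',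
      fun i => ?_, fun i hi x => ?_, fun i hi x => h1supp' i (by omega) x, ?_⟩
    · constructor
      · by_cases h : i = k
        · simp only [h, if_pos rfl]; exact (hγsm' k).1.add hμsm
        · simp only [h, if_false]; exact (hγsm' i).1
      · exact (hγsm' i).2
    · have hik : i ≠ k := by omega
      simp only [hik, if_false]
      exact h0supp' i (by omega) x
    · intro y hy x hx
      beta_reduce
      have h1x : (1:ℝ) - x ≠ 0 := by have := hx.2; intro h; rw [sub_eq_zero] at h; linarith
      have hDk : (Delta1 N)^[k] y x = LC d (2*k+1) y x := hdeq y hy x hx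
      have hμk : μ x * (1-x)^k = c (2*k) x := by
        rw [hμ]; field_simp
      have step1 : LC c (2*k+1) y x = LC ct (2*k) y x + μ x * (Delta1 N)^[k] y x := by
        rw [hDk, LC, LC, LC, Finset.sum_range_succ, Finset.sum_range_succ, mul_add,
          Finset.mul_sum]
        have hA : ∑ i ∈ Finset.range (2*k), ct i x * iteratedDeriv i y x
            = ∑ i ∈ Finset.range (2*k), (c i x * iteratedDeriv i y x
                - μ x * (d i x * iteratedDeriv i y x)) := by
          refine Finset.sum_congr rfl fun i hi => ?_
          have h := Finset.mem_range.mp hi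
          simp only [hct]; rw [if_pos h]; ring
        rw [hA, Finset.sum_sub_distrib, hdtop x, ← hμk]
        ring
      rw [step1, heq' y hy x hx]
      have hlast : γ1' (2*k) x * Dcheck1 ((Delta1 N)^[2*k] y) x
          + γ0' (2*k) x * (Delta1 N)^[2*k] y x = 0 := by
        rw [h1supp' (2*k) (by omega) x, h0supp' (2*k) (by omega) x]; ring
      have hsum : ∀ i ∈ Finset.range (2*k+1),
          (γ1' i x * Dcheck1 ((Delta1 N)^[i] y) x
            + (if i = k then (fun x => γ0' i x + μ x) else γ0' i) x * (Delta1 N)^[i] y x)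
          = (γ1' i x * Dcheck1 ((Delta1 N)^[i] y) x + γ0' i x * (Delta1 N)^[i] y x)
            + (if i = k then μ x * (Delta1 N)^[i] y x else 0) := by
        intro i _
        by_cases h : i = k
        · subst h; simp only [eq_self_iff_true, if_true]; ring
        · simp only [h, if_false]; ring
      have hite : ∑ i ∈ Finset.range (2*k+1), (if i = k then μ x * (Delta1 N)^[i] y x else 0)
          = μ x * (Delta1 N)^[k] y x := by
        simp
        intro h; exact absurd h (by omega)
      have hR : ∑ i ∈ Finset.range (2*k+1),
            (γ1' i x * Dcheck1 ((Delta1 N)^[i] y) x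
              + (if i = k then (fun x => γ0' i x + μ x) else γ0' i) x * (Delta1 N)^[i] y x)
          = (∑ i ∈ Finset.range (2*k),
              (γ1' i x * Dcheck1 ((Delta1 N)^[i] y) x + γ0' i x * (Delta1 N)^[i] y x))
            + μ x * (Delta1 N)^[k] y x := by
        rw [Finset.sum_congr rfl hsum, Finset.sum_add_distrib, hite,
          Finset.sum_range_succ, hlast, add_zero]
      exact hR.symm
  · -- odd top derivative j = 2k+1 : use Ď Δ^k
    obtain ⟨k, hk⟩ := hpar
    subst hk
    obtain ⟨d, hdsm, hdsupp, hdtop, hdeq⟩ := delta_pow N k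
    set e := shiftD d with he
    have hesm : ∀ i, Sm (e i) := shiftD_sm hdsm
    have hesupp : Supp e (2*k+2) := shiftD_supp hdsupp
    set E : ℕ → ℝ → ℝ := fun i x => -(1-x) * e i x with hE
    have hEsm : ∀ i, Sm (E i) := fun i => ((sm_one_sub.neg).mul (hesm i))
    have hEtop : ∀ x, E (2*k+1) x = -(1-x)^(k+1) := by
      intro x
      have h4 : e (2*k+1) x = deriv (d (2*k+1)) x + d (2*k) x := by
        show deriv (d (2*k+1)) x + (if 2*k+1 = 0 then 0 else d (2*k+1-1) x) = _
        simp only [show 2*k+1 ≠ 0 by omega, if_false]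
        norm_num
      have h5 : deriv (d (2*k+1)) x = 0 := deriv_of_zero (fun t => hdsupp _ (by omega) t) x
      show -(1-x) * e (2*k+1) x = _
      rw [h4, h5, hdtop x]
      ring
    set μ : ℝ → ℝ := fun x => -(c (2*k+1) x) * ((1-x)^(k+1))⁻¹ with hμ
    have hμsm : Sm μ := ((hsm _).neg).mul (sm_pow_inv (k+1))
    set ct : ℕ → ℝ → ℝ := fun i x => if i < 2*k+1 then c i x - μ x * E i x else 0 with hct
    have hctsm : ∀ i, Sm (ct i) := by
      intro i
      by_cases h : i < 2*k+1
      · have : ct i = fun x => c i x - μ x * E i x := by funext x; simp only [hct, if_pos h]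
        rw [this]; exact (hsm i).sub (hμsm.mul (hEsm i))
      · have : ct i = fun _ => 0 := by funext x; simp only [hct, if_neg h]
        rw [this]; exact contDiffOn_const
    have hctsupp : Supp ct (2*k+1) := by
      intro i hi x; simp only [hct, if_neg (show ¬ i < 2*k+1 by omega)]
    obtain ⟨γ0', γ1', hγsm', h0supp', h1supp', heq'⟩ := IH (2*k+1) (by omega) ct hctsm hctsupp
    refine ⟨γ0', fun i => if i = k then (fun x => γ1' i x + μ x) else γ1' i,
      fun i => ?_, fun i hi x => h0supp' i (by omega) x, fun i hi x => ?_, ?_⟩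
    · constructor
      · exact (hγsm' i).1
      · by_cases h : i = k
        · simp only [h, if_pos rfl]; exact (hγsm' k).2.add hμsm
        · simp only [h, if_false]; exact (hγsm' i).2
    · have hik : i ≠ k := by omega
      simp only [hik, if_false]
      exact h1supp' i (by omega) x
    · intro y hy x hx
      beta_reduce
      have h1x : (1:ℝ) - x ≠ 0 := by have := hx.2; intro h; rw [sub_eq_zero] at h; linarith
      have hDk : Dcheck1 ((Delta1 N)^[k] y) x = LC E (2*k+2) y x := by
        show -(1-x) * deriv ((Delta1 N)^[k] y) x = _
        rw [deriv_congr_Ioo (hdeq y hy) hx, LC_deriv hdsm hdsupp hy hx, LC, LC,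
          Finset.mul_sum]
        exact Finset.sum_congr rfl fun i _ => by rw [hE]; ring
      have hμk : μ x * (-(1-x)^(k+1)) = c (2*k+1) x := by
        rw [hμ]
        field_simp
      have e1 : LC c (2*k+2) y x
          = LC c (2*k+1) y x + c (2*k+1) x * iteratedDeriv (2*k+1) y x := by
        rw [LC, LC, show 2*k+2 = (2*k+1)+1 by ring, Finset.sum_range_succ]
      have e2 : LC E (2*k+2) y x
          = LC E (2*k+1) y x + E (2*k+1) x * iteratedDeriv (2*k+1) y x := by
        rw [LC, LC, show 2*k+2 = (2*k+1)+1 by ring, Finset.sum_range_succ]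
      have hA : LC ct (2*k+1) y x = LC c (2*k+1) y x - μ x * LC E (2*k+1) y x := by
        rw [LC, LC, LC, Finset.mul_sum, ← Finset.sum_sub_distrib]
        refine Finset.sum_congr rfl fun i hi => ?_
        have h := Finset.mem_range.mp hi
        simp only [hct]; rw [if_pos h]; ring
      have hEc : μ x * E (2*k+1) x = c (2*k+1) x := by
        rw [hEtop x]; exact hμk
      have step1 : LC c (2*k+2) y x
          = LC ct (2*k+1) y x + μ x * Dcheck1 ((Delta1 N)^[k] y) x := by
        rw [hDk, e1, e2, hA, mul_add, ← mul_assoc, hEc]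
        ring
      rw [step1, heq' y hy x hx]
      have hlast : γ1' (2*k+1) x * Dcheck1 ((Delta1 N)^[2*k+1] y) x
          + γ0' (2*k+1) x * (Delta1 N)^[2*k+1] y x = 0 := by
        rw [h1supp' (2*k+1) (by omega) x, h0supp' (2*k+1) (by omega) x]; ring
      have hsum : ∀ i ∈ Finset.range (2*k+2),
          ((if i = k then (fun x => γ1' i x + μ x) else γ1' i) x
              * Dcheck1 ((Delta1 N)^[i] y) x
            + γ0' i x * (Delta1 N)^[i] y x)
          = (γ1' i x * Dcheck1 ((Delta1 N)^[i] y) x + γ0' i x * (Delta1 N)^[i] y x)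
            + (if i = k then μ x * Dcheck1 ((Delta1 N)^[i] y) x else 0) := by
        intro i _
        by_cases h : i = k
        · subst h; simp only [eq_self_iff_true, if_true]; ring
        · simp only [h, if_false]; ring
      have hite : ∑ i ∈ Finset.range (2*k+2),
            (if i = k then μ x * Dcheck1 ((Delta1 N)^[i] y) x else 0)
          = μ x * Dcheck1 ((Delta1 N)^[k] y) x := by
        simp
        intro h; exact absurd h (by omega)
      have hR : ∑ i ∈ Finset.range (2*k+2),
            ((if i = k then (fun x => γ1' i x + μ x) else γ1' i) x
                * Dcheck1 ((Delta1 N)^[i] y) x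
              + γ0' i x * (Delta1 N)^[i] y x)
          = (∑ i ∈ Finset.range (2*k+1),
              (γ1' i x * Dcheck1 ((Delta1 N)^[i] y) x + γ0' i x * (Delta1 N)^[i] y x))
            + μ x * Dcheck1 ((Delta1 N)^[k] y) x := by
        rw [Finset.sum_congr rfl hsum, Finset.sum_add_distrib, hite,
          Finset.sum_range_succ, hlast, add_zero]
      exact hR.symm

end NF
/-- **Appendix 2** (normal form of powers of `αΔ + βĎ`): there are smooth coefficients
`γ_{0k}, γ_{1k}` on `(0,1)`, with `γ_{1m} ≡ 0`, such that
`(αΔ + βĎ)^m y = Σ_{k≤m} (γ_{1k} Ď Δ^k y + γ_{0k} Δ^k y)` for all smooth `y`. -/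
theorem iterate_normal_form (N : ℝ) (hN : 4 ≤ N) (m : ℕ) :
    ∃ γ0 γ1 : ℕ → ℝ → ℝ,
      (∀ k ≤ m, ContDiffOn ℝ (⊤:ℕ∞) (γ0 k) (Ioo 0 1)
        ∧ ContDiffOn ℝ (⊤:ℕ∞) (γ1 k) (Ioo 0 1)) ∧
      (∀ x ∈ Ioo (0:ℝ) 1, γ1 m x = 0) ∧
      (∀ y : ℝ → ℝ, ContDiffOn ℝ (⊤:ℕ∞) y (Ioo 0 1) → ∀ x ∈ Ioo (0:ℝ) 1,
        (Tober N)^[m] y x = ∑ k ∈ Finset.range (m+1),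
          (γ1 k x * Dcheck1 ((Delta1 N)^[k] y) x + γ0 k x * (Delta1 N)^[k] y x)) := by
  obtain ⟨c, hsm, hsupp, heq⟩ := NF.tober_pow N m
  obtain ⟨γ0, γ1, hγsm, h0supp, h1supp, hmain⟩ := NF.elim N (2*m+1) c hsm hsupp
  refine ⟨γ0, γ1, fun k _ => ⟨(hγsm k).1, (hγsm k).2⟩,
    fun x _ => h1supp m (by omega) x, ?_⟩
  intro y hy x hx
  rw [heq y hy x hx, hmain y hy x hx]
  refine (Finset.sum_subset (Finset.range_subset_range.mpr (by omega)) ?_).symm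
  intro i hi hi'
  have him : m+1 ≤ i := by simpa using hi'
  rw [h0supp i (by omega) x, h1supp i (by omega) x]; ring
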